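/- arXiv:2302.00363 — 2 statements merged into one kernel-verified Lean document; each statement's English description precedes it below -/
import Mathlib

section
/- Consider the nonmonotone descent method with oracle applied to p, run with tolerance ε = 0, and suppose inf p ∈ ℝ. Let x* ∈ ℝⁿ be an accumulation point of the sequence {xʲ}. Then x* is Υ-stationary for p: there exists z* ∈ O(x*) such that ∇ₓF(x*, z*) = 0, i.e., ∇f(x*) + (1/μ) Jc(x*)ᵀ (c(x*) + μŷ − z*) = 0. -/
open Filter Topology Bornology

noncomputable section

variable {H : Type*} [NormedAddCommGroup H] [InnerProductSpace ℝ H]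

/-- The regular (Fréchet) subdifferential of an extended-real-valued function `h` at `x`:
`v` belongs to it iff `h x` is finite and
`liminf_{w → x, w ≠ x} (h w − h x − ⟨v, w − x⟩)/‖w − x‖ ≥ 0`. -/
def regSubdiff (h : H → EReal) (x : H) : Set H :=
  {v | h x ≠ ⊤ ∧ h x ≠ ⊥ ∧ (0 : EReal) ≤
    Filter.liminf
      (fun w => (h w - h x - ((inner ℝ v (w - x) : ℝ) : EReal)) / ((‖w - x‖ : ℝ) : EReal))
      (𝓝[≠] x)}

/-- The limiting (Mordukhovich) subdifferential of `h` at `x`: limits of regular subgradients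
along `h`-attentively convergent sequences. -/
def limSubdiff (h : H → EReal) (x : H) : Set H :=
  {v | ∃ xs vs : ℕ → H,
      Tendsto xs atTop (𝓝 x) ∧ Tendsto (fun k => h (xs k)) atTop (𝓝 (h x)) ∧
      (∀ k, vs k ∈ regSubdiff h (xs k)) ∧ Tendsto vs atTop (𝓝 v)}

/-- The proximal mapping of `g` with parameter `γ` evaluated at `u`, as a set:
`argmin_z { g(z) + ‖z − u‖²/(2γ) }`. -/
def proxSet (g : H → EReal) (γ : ℝ) (u : H) : Set H :=
  {z | ∀ w, g z + ((‖z - u‖ ^ 2 / (2 * γ) : ℝ) : EReal) ≤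
        g w + ((‖w - u‖ ^ 2 / (2 * γ) : ℝ) : EReal)}

/-- `g + ‖·‖²/(2γ)` is bounded below on the whole space. -/
def ProxBoundedAt (g : H → EReal) (γ : ℝ) : Prop :=
  ∃ b : ℝ, ∀ z, (b : EReal) ≤ g z + ((‖z‖ ^ 2 / (2 * γ) : ℝ) : EReal)

/-- `g` is prox-bounded: `g + ‖·‖²/(2γ)` is bounded below for some `γ > 0`. -/
def ProxBounded (g : H → EReal) : Prop :=
  ∃ γ > (0 : ℝ), ProxBoundedAt g γ

/-- The limiting normal cone to `D` at `z`: limits of `λᵏ (vᵏ − wᵏ)` with `λᵏ ≥ 0`,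
`wᵏ` a Euclidean projection of `vᵏ` onto `D`, and `vᵏ → z`. -/
def limNormalCone {H' : Type*} [NormedAddCommGroup H'] [NormedSpace ℝ H']
    (D : Set H') (z : H') : Set H' :=
  {v | ∃ (vs ws : ℕ → H') (ls : ℕ → ℝ), (∀ k, 0 ≤ ls k) ∧
      (∀ k, ws k ∈ D ∧ ∀ u ∈ D, ‖ws k - vs k‖ ≤ ‖u - vs k‖) ∧
      Tendsto vs atTop (𝓝 z) ∧ Tendsto (fun k => ls k • (vs k - ws k)) atTop (𝓝 v)}


/-- Smooth part of the explicit AL function: `F(x,z) = f(x) + ‖c(x) + μŷ − z‖²/(2μ)`. -/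
def Ffun {n m : ℕ} (f : EuclideanSpace ℝ (Fin n) → ℝ)
    (c : EuclideanSpace ℝ (Fin n) → EuclideanSpace ℝ (Fin m))
    (μ : ℝ) (yh : EuclideanSpace ℝ (Fin m))
    (xx : EuclideanSpace ℝ (Fin n)) (zz : EuclideanSpace ℝ (Fin m)) : ℝ :=
  f xx + ‖c xx + μ • yh - zz‖ ^ 2 / (2 * μ)

/-- The implicit AL function: `p(x) = inf_z { F(x,z) + g(z) }`. -/
def pfun {n m : ℕ} (f : EuclideanSpace ℝ (Fin n) → ℝ)
    (c : EuclideanSpace ℝ (Fin n) → EuclideanSpace ℝ (Fin m))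
    (g : EuclideanSpace ℝ (Fin m) → EReal)
    (μ : ℝ) (yh : EuclideanSpace ℝ (Fin m)) (xx : EuclideanSpace ℝ (Fin n)) : EReal :=
  ⨅ zz, (((Ffun f c μ yh xx zz : ℝ) : EReal) + g zz)

/-- The partial gradient `∇ₓ F(x, z)`. -/
def gradF {n m : ℕ} (f : EuclideanSpace ℝ (Fin n) → ℝ)
    (c : EuclideanSpace ℝ (Fin n) → EuclideanSpace ℝ (Fin m))
    (μ : ℝ) (yh : EuclideanSpace ℝ (Fin m))
    (xx : EuclideanSpace ℝ (Fin n)) (zz : EuclideanSpace ℝ (Fin m)) :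
    EuclideanSpace ℝ (Fin n) :=
  gradient (fun x' => Ffun f c μ yh x' zz) xx


section AuxLemmas

variable {n m : ℕ} {f : EuclideanSpace ℝ (Fin n) → ℝ}
    {c : EuclideanSpace ℝ (Fin n) → EuclideanSpace ℝ (Fin m)}
    {g : EuclideanSpace ℝ (Fin m) → EReal} {μ : ℝ} {yh : EuclideanSpace ℝ (Fin m)}

/-- The joint gradient map `(x, z) ↦ ∇ₓF(x, z)`. -/
def gradmap (f : EuclideanSpace ℝ (Fin n) → ℝ)
    (c : EuclideanSpace ℝ (Fin n) → EuclideanSpace ℝ (Fin m))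
    (μ : ℝ) (yh : EuclideanSpace ℝ (Fin m))
    (p : EuclideanSpace ℝ (Fin n) × EuclideanSpace ℝ (Fin m)) : EuclideanSpace ℝ (Fin n) :=
  gradient f p.1 + μ⁻¹ • ContinuousLinearMap.adjoint (fderiv ℝ c p.1) (c p.1 + μ • yh - p.2)

theorem hasGradientAt_Ffun (hf : ContDiff ℝ 1 f) (hc : ContDiff ℝ 1 c) (hμ : 0 < μ)
    (z : EuclideanSpace ℝ (Fin m)) (x : EuclideanSpace ℝ (Fin n)) :
    HasGradientAt (fun x' => Ffun f c μ yh x' z) (gradmap f c μ yh (x, z)) x := by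
  show HasGradientAt (fun x' => Ffun f c μ yh x' z)
      (gradient f x + μ⁻¹ •
        ContinuousLinearMap.adjoint (fderiv ℝ c x) (c x + μ • yh - z)) x
  have hfd : HasFDerivAt f (fderiv ℝ f x) x :=
    (hf.differentiable one_ne_zero x).hasFDerivAt
  have hcd : HasFDerivAt c (fderiv ℝ c x) x :=
    (hc.differentiable one_ne_zero x).hasFDerivAt
  set C := fderiv ℝ c x
  have hw : HasFDerivAt (fun x' => c x' + μ • yh - z) C x := by
    simpa using (hcd.add_const (μ • yh)).sub_const z
  set w : EuclideanSpace ℝ (Fin m) := c x + μ • yh - z with hwdef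
  have hq : HasFDerivAt (fun x' => (inner ℝ (c x' + μ • yh - z) (c x' + μ • yh - z) : ℝ))
      ((fderivInnerCLM ℝ (w, w)).comp (C.prod C)) x := hw.inner ℝ hw
  have key : HasFDerivAt (fun x' => Ffun f c μ yh x' z)
      (fderiv ℝ f x + (2 * μ)⁻¹ • ((fderivInnerCLM ℝ (w, w)).comp (C.prod C))) x := by
    have : ∀ x', Ffun f c μ yh x' z
        = f x' + (2*μ)⁻¹ * (inner ℝ (c x' + μ • yh - z) (c x' + μ • yh - z) : ℝ) := by
      intro x'
      rw [Ffun, real_inner_self_eq_norm_sq]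
      ring
    simp only [this]
    exact hfd.add (hq.const_mul _)
  rw [hasGradientAt_iff_hasFDerivAt]
  refine key.congr_fderiv ?_
  symm
  ext s
  have hg : (inner ℝ (gradient f x) s : ℝ) = fderiv ℝ f x s := by
    rw [gradient, ← InnerProductSpace.toDual_apply_apply, LinearIsometryEquiv.apply_symm_apply]
  simp only [InnerProductSpace.toDual_apply_apply, ContinuousLinearMap.add_apply,
    ContinuousLinearMap.coe_smul', Pi.smul_apply, ContinuousLinearMap.comp_apply,
    ContinuousLinearMap.prod_apply, fderivInnerCLM_apply, smul_eq_mul]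
  rw [inner_add_left, real_inner_smul_left, ContinuousLinearMap.adjoint_inner_left, hg,
    real_inner_comm (C s) w]
  have hμ' : μ ≠ 0 := ne_of_gt hμ
  field_simp
  ring

theorem gradF_eq (hf : ContDiff ℝ 1 f) (hc : ContDiff ℝ 1 c) (hμ : 0 < μ)
    (x : EuclideanSpace ℝ (Fin n)) (z : EuclideanSpace ℝ (Fin m)) :
    gradF f c μ yh x z = gradmap f c μ yh (x, z) :=
  (hasGradientAt_Ffun hf hc hμ z x).gradient

theorem continuous_gradmap (hf : ContDiff ℝ 1 f) (hc : ContDiff ℝ 1 c) (μ : ℝ)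
    (yh : EuclideanSpace ℝ (Fin m)) :
    Continuous (gradmap f c μ yh) := by
  show Continuous (fun p : EuclideanSpace ℝ (Fin n) × EuclideanSpace ℝ (Fin m) =>
      gradient f p.1 + μ⁻¹ •
        ContinuousLinearMap.adjoint (fderiv ℝ c p.1) (c p.1 + μ • yh - p.2))
  have h1 : Continuous (fun x => gradient f x) :=
    (InnerProductSpace.toDual ℝ _).symm.continuous.comp (hf.continuous_fderiv one_ne_zero)
  have h2 : Continuous (fun x => ContinuousLinearMap.adjoint (fderiv ℝ c x)) :=
    (ContinuousLinearMap.adjoint : _ ≃ₗᵢ⋆[ℝ] _).continuous.comp (hc.continuous_fderiv one_ne_zero)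
  have h3 : Continuous (fun p : EuclideanSpace ℝ (Fin n) × EuclideanSpace ℝ (Fin m) =>
      c p.1 + μ • yh - p.2) :=
    (((hc.continuous.comp continuous_fst).add continuous_const).sub continuous_snd)
  have h4 : Continuous (fun p : EuclideanSpace ℝ (Fin n) × EuclideanSpace ℝ (Fin m) =>
      ContinuousLinearMap.adjoint (fderiv ℝ c p.1) (c p.1 + μ • yh - p.2)) :=
    isBoundedBilinearMap_apply.continuous.comp ((h2.comp continuous_fst).prodMk h3)
  exact (h1.comp continuous_fst).add ((continuous_const_smul μ⁻¹).comp h4)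

theorem pfun_le (x : EuclideanSpace ℝ (Fin n)) (z : EuclideanSpace ℝ (Fin m)) :
    pfun f c g μ yh x ≤ ((Ffun f c μ yh x z : ℝ) : EReal) + g z := iInf_le _ z

theorem Ffun_eq' (x : EuclideanSpace ℝ (Fin n)) (z : EuclideanSpace ℝ (Fin m)) :
    Ffun f c μ yh x z = f x + ‖z - (c x + μ • yh)‖ ^ 2 / (2 * μ) := by
  rw [Ffun, norm_sub_rev]

theorem prox_finite {u z : EuclideanSpace ℝ (Fin m)}
    (hz : z ∈ proxSet g μ u) (hgproper : ∃ z0, g z0 ≠ ⊤) (hgbot : ∀ z0, g z0 ≠ ⊥) :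
    ∃ r : ℝ, g z = (r : EReal) := by
  obtain ⟨z0, hz0⟩ := hgproper
  have hz0' : g z0 = ((g z0).toReal : EReal) := (EReal.coe_toReal hz0 (hgbot z0)).symm
  have h := hz z0
  rw [hz0', ← EReal.coe_add] at h
  have htop : g z ≠ ⊤ := by
    intro h'
    rw [h', EReal.top_add_coe] at h
    exact EReal.coe_ne_top _ (top_le_iff.mp h)
  exact ⟨(g z).toReal, (EReal.coe_toReal htop (hgbot z)).symm⟩

theorem pfun_eq_of_mem {x : EuclideanSpace ℝ (Fin n)} {z : EuclideanSpace ℝ (Fin m)}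
    (hz : z ∈ proxSet g μ (c x + μ • yh)) :
    pfun f c g μ yh x = ((Ffun f c μ yh x z : ℝ) : EReal) + g z := by
  refine le_antisymm (pfun_le x z) (le_iInf fun w => ?_)
  rw [Ffun_eq' x z, Ffun_eq' x w, EReal.coe_add, EReal.coe_add, add_assoc, add_assoc]
  refine add_le_add le_rfl ?_
  rw [add_comm _ (g z), add_comm _ (g w)]
  exact hz w

end AuxLemmas

set_option maxHeartbeats 1600000 in
/-- Every accumulation point of the nonmonotone descent method with
oracle is Υ-stationary for the implicit AL function p. -/
theorem descent_method_accumulation_is_Upsilon_stationary {n m : ℕ}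
    (f : EuclideanSpace ℝ (Fin n) → ℝ)
    (c : EuclideanSpace ℝ (Fin n) → EuclideanSpace ℝ (Fin m))
    (g : EuclideanSpace ℝ (Fin m) → EReal)
    (hf : ContDiff ℝ 1 f) (hc : ContDiff ℝ 1 c)
    (hgproper : ∃ z, g z ≠ ⊤) (hgbot : ∀ z, g z ≠ ⊥)
    (hglsc : LowerSemicontinuous g)
    (μ : ℝ) (hμpos : 0 < μ)
    (hμthr : ∃ γ0 : ℝ, μ < γ0 ∧ ProxBoundedAt g γ0)
    (yh : EuclideanSpace ℝ (Fin m))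
    -- parameters of the descent method
    (α β θ ω ν : ℝ)
    (hα : α ∈ Set.Ioo (0 : ℝ) 1) (hβ : β ∈ Set.Ioo (0 : ℝ) 1)
    (hθ : θ ∈ Set.Ioo (0 : ℝ) 1)
    (hω : ω ∈ Set.Ioc (0 : ℝ) 1) (hν : ν ∈ Set.Ioc (0 : ℝ) 1)
    -- iterates of the method (run with tolerance ε = 0, never terminating)
    (x : ℕ → EuclideanSpace ℝ (Fin n)) (zs : ℕ → EuclideanSpace ℝ (Fin m))
    (d : ℕ → EuclideanSpace ℝ (Fin n)) (γ : ℕ → ℝ) (l : ℕ → ℕ) (Φ : ℕ → EReal)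
    (hΦ0 : Φ 0 = pfun f c g μ yh (x 0))
    (hzs : ∀ j, zs j ∈ proxSet g μ (c (x j) + μ • yh))
    (hne : ∀ j, gradF f c μ yh (x j) (zs j) ≠ 0)
    (hdir : ∀ j, (inner ℝ (gradF f c μ yh (x j) (zs j)) (d j) : ℝ) ≤
        -(θ * (‖gradF f c μ yh (x j) (zs j)‖ * ‖d j‖)) ∧
      ω * ‖gradF f c μ yh (x j) (zs j)‖ ≤ ‖d j‖)
    (hγ : ∀ j, γ j = β ^ l j)
    (hls : ∀ j, pfun f c g μ yh (x j + γ j • d j) ≤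
      Φ j + ((α * γ j * (inner ℝ (gradF f c μ yh (x j) (zs j)) (d j) : ℝ) : ℝ) : EReal))
    (hlargest : ∀ j, ∀ l' < l j, ¬ (pfun f c g μ yh (x j + β ^ l' • d j) ≤
      Φ j + ((α * β ^ l' * (inner ℝ (gradF f c μ yh (x j) (zs j)) (d j) : ℝ) : ℝ) : EReal)))
    (hxupd : ∀ j, pfun f c g μ yh (x (j + 1)) ≤ pfun f c g μ yh (x j + γ j • d j))
    (hΦupd : ∀ j, Φ (j + 1) =
      ((1 - ν : ℝ) : EReal) * Φ j + ((ν : ℝ) : EReal) * pfun f c g μ yh (x (j + 1)))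
    -- inf p ∈ ℝ
    (hinf : ∃ b : ℝ, ∀ x', (b : EReal) ≤ pfun f c g μ yh x')
    -- accumulation point
    (xstar : EuclideanSpace ℝ (Fin n))
    (hacc : ∃ φ : ℕ → ℕ, StrictMono φ ∧ Tendsto (fun k => x (φ k)) atTop (𝓝 xstar))
    : ∃ zstar ∈ proxSet g μ (c xstar + μ • yh),
      gradF f c μ yh xstar zstar = 0 ∧
      gradient f xstar + μ⁻¹ •
        ContinuousLinearMap.adjoint (fderiv ℝ c xstar) (c xstar + μ • yh - zstar) = 0 := by
  classical
  obtain ⟨b, hb⟩ := hinf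
  obtain ⟨φ, hφmono, hφtend⟩ := hacc
  have hμne : μ ≠ 0 := ne_of_gt hμpos
  -- real value of g at the oracle points
  have hGz' : ∀ j, ∃ r : ℝ, g (zs j) = (r : EReal) :=
    fun j => prox_finite (hzs j) hgproper hgbot
  choose Gz hGz using hGz'
  -- the value function is real-valued
  obtain ⟨P, hP⟩ : ∃ P : EuclideanSpace ℝ (Fin n) → ℝ,
      ∀ x', pfun f c g μ yh x' = ((P x' : ℝ) : EReal) := by
    refine ⟨fun x' => (pfun f c g μ yh x').toReal, fun x' => (EReal.coe_toReal ?_ ?_).symm⟩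
    · have h1 : pfun f c g μ yh x' ≤ ((Ffun f c μ yh x' (zs 0) + Gz 0 : ℝ) : EReal) := by
        rw [EReal.coe_add]
        exact (pfun_le x' (zs 0)).trans (le_of_eq (by rw [hGz 0]))
      exact ne_top_of_le_ne_top (EReal.coe_ne_top _) h1
    · intro h
      have h2 := hb x'
      rw [h, le_bot_iff] at h2
      exact EReal.coe_ne_bot b h2
  have hPb : ∀ x', b ≤ P x' := by
    intro x'
    have := hb x'
    rw [hP x'] at this
    exact EReal.coe_le_coe_iff.mp this
  have hPle : ∀ (x' : EuclideanSpace ℝ (Fin n)) (j : ℕ),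
      P x' ≤ Ffun f c μ yh x' (zs j) + Gz j := by
    intro x' j
    have := pfun_le (f := f) (c := c) (g := g) (μ := μ) (yh := yh) x' (zs j)
    rw [hP x', hGz j, ← EReal.coe_add] at this
    exact EReal.coe_le_coe_iff.mp this
  have hPeq : ∀ j, P (x j) = Ffun f c μ yh (x j) (zs j) + Gz j := by
    intro j
    have := pfun_eq_of_mem (f := f) (yh := yh) (hzs j)
    rw [hP (x j), hGz j, ← EReal.coe_add] at this
    exact EReal.coe_injective this
  -- Φ is real-valued
  obtain ⟨ΦR, hΦcoe⟩ : ∃ ΦR : ℕ → ℝ, ∀ j, Φ j = ((ΦR j : ℝ) : EReal) := by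
    refine ⟨fun j => (Φ j).toReal, fun j => ?_⟩
    show Φ j = (((Φ j).toReal : ℝ) : EReal)
    induction j with
    | zero => rw [hΦ0, hP (x 0), EReal.toReal_coe]
    | succ j ih =>
      have h2 : Φ (j+1) = (((1 - ν) * (Φ j).toReal + ν * P (x (j+1)) : ℝ) : EReal) := by
        rw [hΦupd j, EReal.coe_add, EReal.coe_mul, EReal.coe_mul, ← ih, ← hP]
      rw [h2, EReal.toReal_coe]
  have hΦrec : ∀ j, ΦR (j+1) = (1 - ν) * ΦR j + ν * P (x (j+1)) := by
    intro j
    have := hΦupd j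
    rw [hΦcoe (j+1), hΦcoe j, hP (x (j+1)), ← EReal.coe_mul, ← EReal.coe_mul,
      ← EReal.coe_add] at this
    exact EReal.coe_injective this
  -- abbreviations
  set G : ℕ → EuclideanSpace ℝ (Fin n) := fun j => gradF f c μ yh (x j) (zs j) with hGdef
  set ip : ℕ → ℝ := fun j => (inner ℝ (G j) (d j) : ℝ) with hipdef
  -- real versions of the algorithmic inequalities
  have hArm : ∀ j, P (x j + γ j • d j) ≤ ΦR j + α * γ j * ip j := by
    intro j
    have := hls j
    rw [hP, hΦcoe j, ← EReal.coe_add] at this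
    exact EReal.coe_le_coe_iff.mp this
  have hfail : ∀ j, ∀ l' < l j, ΦR j + α * β ^ l' * ip j < P (x j + β ^ l' • d j) := by
    intro j l' hl'
    have := hlargest j l' hl'
    rw [hP, hΦcoe j, ← EReal.coe_add, EReal.coe_le_coe_iff] at this
    linarith [not_le.mp this]
  have hdec : ∀ j, P (x (j+1)) ≤ P (x j + γ j • d j) := by
    intro j
    have := hxupd j
    rw [hP, hP] at this
    exact EReal.coe_le_coe_iff.mp this
  have hγpos : ∀ j, 0 < γ j := by
    intro j; rw [hγ j]; exact pow_pos hβ.1 _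
  have hipneg : ∀ j, ip j ≤ -(θ * (‖G j‖ * ‖d j‖)) := fun j => (hdir j).1
  have hdnorm : ∀ j, ω * ‖G j‖ ≤ ‖d j‖ := fun j => (hdir j).2
  have hθd : ∀ j, 0 ≤ θ * (‖G j‖ * ‖d j‖) := fun j =>
    mul_nonneg hθ.1.le (mul_nonneg (norm_nonneg _) (norm_nonneg _))
  have hipneg0 : ∀ j, ip j ≤ 0 := fun j => (hipneg j).trans (neg_nonpos.mpr (hθd j))
  -- Φ decreases
  have hPxΦ : ∀ j, P (x j) ≤ ΦR j := by
    intro j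
    induction j with
    | zero =>
      have : ΦR 0 = P (x 0) := by
        have := hΦ0; rw [hΦcoe 0, hP (x 0)] at this; exact EReal.coe_injective this
      rw [this]
    | succ j ih =>
      have h1 : P (x (j+1)) ≤ ΦR j := by
        refine (hdec j).trans ((hArm j).trans ?_)
        have : α * γ j * ip j ≤ 0 :=
          mul_nonpos_of_nonneg_of_nonpos (mul_nonneg hα.1.le (hγpos j).le) (hipneg0 j)
        linarith
      rw [hΦrec j]
      nlinarith [mul_nonneg (by linarith [hν.2] : (0:ℝ) ≤ 1 - ν)
        (by linarith : (0:ℝ) ≤ ΦR j - P (x (j+1)))]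
  have hstep : ∀ j, ΦR (j+1) + ν * (α * (θ * (γ j * (‖G j‖ * ‖d j‖)))) ≤ ΦR j := by
    intro j
    have h1 : P (x (j+1)) ≤ ΦR j + α * γ j * ip j := (hdec j).trans (hArm j)
    have h2 : α * γ j * ip j ≤ α * γ j * (-(θ * (‖G j‖ * ‖d j‖))) :=
      mul_le_mul_of_nonneg_left (hipneg j) (mul_nonneg hα.1.le (hγpos j).le)
    have h3 : P (x (j+1)) ≤ ΦR j - α * (θ * (γ j * (‖G j‖ * ‖d j‖))) := by
      have : α * γ j * (-(θ * (‖G j‖ * ‖d j‖))) = -(α * (θ * (γ j * (‖G j‖ * ‖d j‖)))) := by ring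
      rw [this] at h2
      linarith
    have h4 := mul_le_mul_of_nonneg_left h3 hν.1.le
    rw [hΦrec j]
    nlinarith [h4]
  have hnuq : ∀ j, 0 ≤ ν * (α * (θ * (γ j * (‖G j‖ * ‖d j‖)))) := by
    intro j
    refine mul_nonneg hν.1.le (mul_nonneg hα.1.le (mul_nonneg hθ.1.le ?_))
    exact mul_nonneg (hγpos j).le (mul_nonneg (norm_nonneg _) (norm_nonneg _))
  have hΦanti : ∀ j, ΦR (j+1) ≤ ΦR j := fun j => by linarith [hstep j, hnuq j]
  have hΦbdd : ∀ j, b ≤ ΦR j := fun j => (hPb (x j)).trans (hPxΦ j)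
  -- the quantity q j := γ j * (‖G j‖ * ‖d j‖) tends to 0
  set q : ℕ → ℝ := fun j => γ j * (‖G j‖ * ‖d j‖) with hqdef
  have hqnonneg : ∀ j, 0 ≤ q j := fun j =>
    mul_nonneg (hγpos j).le (mul_nonneg (norm_nonneg _) (norm_nonneg _))
  have hq0 : Tendsto q atTop (𝓝 0) := by
    have hanti : Antitone ΦR := antitone_nat_of_succ_le hΦanti
    have hbdd : BddBelow (Set.range ΦR) := ⟨b, by rintro y ⟨j, rfl⟩; exact hΦbdd j⟩
    have hconv := tendsto_atTop_ciInf hanti hbdd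
    have hd1 : Tendsto (fun j => ΦR j - ΦR (j+1)) atTop (𝓝 0) := by
      have := hconv.sub (hconv.comp (tendsto_add_atTop_nat 1))
      simpa using this
    have hsq : Tendsto (fun j => ν * (α * (θ * q j))) atTop (𝓝 0) := by
      refine squeeze_zero (fun j => hnuq j) (fun j => ?_) hd1
      simp only [hqdef]
      linarith [hstep j]
    have hpos : (0:ℝ) < ν * α * θ := mul_pos (mul_pos hν.1 hα.1) hθ.1
    have h5 : ∀ j, (ν * α * θ)⁻¹ * (ν * (α * (θ * q j))) = q j := by
      intro j
      have hν0 : ν ≠ 0 := ne_of_gt hν.1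
      have hα0 : α ≠ 0 := ne_of_gt hα.1
      have hθ0 : θ ≠ 0 := ne_of_gt hθ.1
      field_simp
    have := hsq.const_mul ((ν * α * θ)⁻¹)
    rw [mul_zero] at this
    exact this.congr h5
  -- pass to a subsequence along which the oracle outputs converge
  have hutend : Tendsto (fun k => c (x (φ k)) + μ • yh) atTop (𝓝 (c xstar + μ • yh)) :=
    ((hc.continuous.tendsto xstar).comp hφtend).add_const (μ • yh)
  obtain ⟨U, hU⟩ : ∃ U : ℝ, ∀ k, ‖c (x (φ k)) + μ • yh‖ ≤ U := by
    obtain ⟨U, hU⟩ := hutend.norm.bddAbove_range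
    exact ⟨U, fun k => hU ⟨k, rfl⟩⟩
  obtain ⟨γ0, hγ0μ, b0, hb0⟩ := hμthr
  have hγ0pos : 0 < γ0 := hμpos.trans hγ0μ
  have hpb : ∀ j, b0 ≤ Gz j + ‖zs j‖ ^ 2 / (2 * γ0) := by
    intro j
    have := hb0 (zs j)
    rw [hGz j, ← EReal.coe_add] at this
    exact EReal.coe_le_coe_iff.mp this
  obtain ⟨z0, hz0top⟩ := hgproper
  have hz0coe : g z0 = (((g z0).toReal : ℝ) : EReal) := (EReal.coe_toReal hz0top (hgbot z0)).symm
  set G0 : ℝ := (g z0).toReal with hG0def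
  have hprox_real : ∀ j, ∀ w : EuclideanSpace ℝ (Fin m), ∀ Gw : ℝ, g w = (Gw : EReal) →
      Gz j + ‖zs j - (c (x j) + μ • yh)‖ ^ 2 / (2 * μ)
        ≤ Gw + ‖w - (c (x j) + μ • yh)‖ ^ 2 / (2 * μ) := by
    intro j w Gw hw
    have := hzs j w
    rw [hGz j, hw, ← EReal.coe_add, ← EReal.coe_add] at this
    exact EReal.coe_le_coe_iff.mp this
  -- boundedness of the oracle outputs along the subsequence
  have ha : (0:ℝ) < 1 / (2 * μ) - 1 / (2 * γ0) := by
    rw [sub_pos, div_lt_div_iff₀ (by linarith) (by linarith)]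
    linarith
  set aa : ℝ := 1 / (2 * μ) - 1 / (2 * γ0) with haadef
  set C1 : ℝ := G0 - b0 + (‖z0‖ + U) ^ 2 / (2 * μ) with hC1def
  set R : ℝ := max 1 ((|C1| + U / μ) / aa) with hRdef
  have hR : ∀ k, ‖zs (φ k)‖ ≤ R := by
    intro k
    have h1 := hpb (φ k)
    have h2 := hprox_real (φ k) z0 G0 hz0coe
    have h3 : ‖z0 - (c (x (φ k)) + μ • yh)‖ ^ 2 ≤ (‖z0‖ + U) ^ 2 := by
      have := norm_sub_le z0 (c (x (φ k)) + μ • yh)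
      have hU' := hU k
      nlinarith [norm_nonneg (z0 - (c (x (φ k)) + μ • yh))]
    have h4 : ‖zs (φ k)‖ ^ 2 - 2 * U * ‖zs (φ k)‖ ≤ ‖zs (φ k) - (c (x (φ k)) + μ • yh)‖ ^ 2 := by
      rw [norm_sub_sq_real]
      have hi := real_inner_le_norm (zs (φ k)) (c (x (φ k)) + μ • yh)
      have hU' := hU k
      nlinarith [norm_nonneg (zs (φ k)), norm_nonneg (c (x (φ k)) + μ • yh),
        sq_nonneg (‖c (x (φ k)) + μ • yh‖)]
    set t := ‖zs (φ k)‖ with htdef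
    have ht0 : 0 ≤ t := norm_nonneg _
    -- combine: aa * t^2 - (U/μ) * t ≤ C1
    have hcomb : aa * t ^ 2 - (U / μ) * t ≤ C1 := by
      have e1 : ‖zs (φ k) - (c (x (φ k)) + μ • yh)‖ ^ 2 / (2 * μ) ≤
          G0 + ‖z0 - (c (x (φ k)) + μ • yh)‖ ^ 2 / (2 * μ) - Gz (φ k) := by linarith
      have e2 : (t ^ 2 - 2 * U * t) / (2 * μ) ≤
          ‖zs (φ k) - (c (x (φ k)) + μ • yh)‖ ^ 2 / (2 * μ) :=
        div_le_div_of_nonneg_right h4 (by linarith) |>.trans_eq rfl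
      have e3 : ‖z0 - (c (x (φ k)) + μ • yh)‖ ^ 2 / (2 * μ) ≤ (‖z0‖ + U) ^ 2 / (2 * μ) :=
        div_le_div_of_nonneg_right h3 (by linarith) |>.trans_eq rfl
      have e4 : b0 - t ^ 2 / (2 * γ0) ≤ Gz (φ k) := by linarith
      have r1 : (t ^ 2 - 2 * U * t) / (2 * μ) = t ^ 2 / (2 * μ) - (U / μ) * t := by
        field_simp
      have r2 : aa * t ^ 2 = t ^ 2 / (2 * μ) - t ^ 2 / (2 * γ0) := by
        rw [haadef]; ring
      rw [hC1def, r2]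
      rw [r1] at e2
      linarith
    clear_value aa C1 t
    by_cases hcase : t ≤ 1
    · exact hcase.trans (le_max_left _ _)
    · push_neg at hcase
      have h6 : aa * t ≤ |C1| + U / μ := by
        have hUμ : 0 ≤ U / μ := by
          have hU0 : (0:ℝ) ≤ U := (norm_nonneg _).trans (hU 0)
          positivity
        have h7 : aa * t * t ≤ (|C1| + U / μ) * t := by
          have e1 : aa * t * t = aa * t ^ 2 := by ring
          have e2 : (|C1| + U / μ) * t = |C1| * t + (U / μ) * t := by ring
          rw [e1, e2]
          have e3 : 0 ≤ |C1| * (t - 1) :=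
            mul_nonneg (abs_nonneg C1) (by linarith)
          have e4 : C1 ≤ |C1| := le_abs_self C1
          nlinarith
        exact le_of_mul_le_mul_right h7 (by linarith)
      refine le_trans ?_ (le_max_right _ _)
      rw [le_div_iff₀ ha]
      linarith
  obtain ⟨zstar, -, ψ, hψ, hztend'⟩ :=
    tendsto_subseq_of_bounded (Metric.isBounded_closedBall (x := (0 : EuclideanSpace ℝ (Fin m)))
      (r := R)) (fun k => mem_closedBall_zero_iff.mpr (hR k))
  have hzσ : Tendsto (fun k => zs (φ (ψ k))) atTop (𝓝 zstar) := hztend'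
  have hxσ : Tendsto (fun k => x (φ (ψ k))) atTop (𝓝 xstar) :=
    hφtend.comp hψ.tendsto_atTop
  have huσ : Tendsto (fun k => c (x (φ (ψ k))) + μ • yh) atTop (𝓝 (c xstar + μ • yh)) :=
    hutend.comp hψ.tendsto_atTop
  set σ : ℕ → ℕ := fun k => φ (ψ k) with hσdef
  have hσmono : StrictMono σ := hφmono.comp hψ
  -- the limit point is finite for g
  have hz0normtend : Tendsto (fun k => ‖z0 - (c (x (σ k)) + μ • yh)‖ ^ 2 / (2 * μ)) atTop
      (𝓝 (‖z0 - (c xstar + μ • yh)‖ ^ 2 / (2 * μ))) :=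
    (((huσ.const_sub z0).norm.pow 2).div_const (2 * μ))
  set Q0 : ℝ := ‖z0 - (c xstar + μ • yh)‖ ^ 2 / (2 * μ) with hQ0def
  have hgzfin : g zstar ≠ ⊤ := by
    intro htop
    have hy : ((Q0 + G0 + 1 : ℝ) : EReal) < g zstar := by
      rw [htop]; exact EReal.coe_lt_top _
    have e1 : ∀ᶠ k in atTop, ((Q0 + G0 + 1 : ℝ) : EReal) < g (zs (σ k)) :=
      hzσ.eventually (hglsc zstar _ hy)
    have e2 : ∀ᶠ k in atTop, ‖z0 - (c (x (σ k)) + μ • yh)‖ ^ 2 / (2 * μ) < Q0 + 1 :=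
      hz0normtend.eventually_lt_const (by linarith)
    obtain ⟨k, hk1, hk2⟩ := (e1.and e2).exists
    rw [hGz (σ k), EReal.coe_lt_coe_iff] at hk1
    have hk3 := hprox_real (σ k) z0 G0 hz0coe
    have hnn : 0 ≤ ‖zs (σ k) - (c (x (σ k)) + μ • yh)‖ ^ 2 / (2 * μ) := by positivity
    linarith
  have hGscoe : g zstar = (((g zstar).toReal : ℝ) : EReal) :=
    (EReal.coe_toReal hgzfin (hgbot zstar)).symm
  set Gs : ℝ := (g zstar).toReal with hGsdef
  -- prox membership of the limit
  have hdifftend : Tendsto (fun k => ‖zs (σ k) - (c (x (σ k)) + μ • yh)‖ ^ 2 / (2 * μ)) atTop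
      (𝓝 (‖zstar - (c xstar + μ • yh)‖ ^ 2 / (2 * μ))) :=
    (((hzσ.sub huσ).norm.pow 2).div_const (2 * μ))
  set Qz : ℝ := ‖zstar - (c xstar + μ • yh)‖ ^ 2 / (2 * μ) with hQzdef
  have hzstarmem : zstar ∈ proxSet g μ (c xstar + μ • yh) := by
    intro w
    rcases eq_or_ne (g w) ⊤ with hw | hw
    · rw [hw, EReal.top_add_coe]; exact le_top
    · have hGwcoe : g w = (((g w).toReal : ℝ) : EReal) := (EReal.coe_toReal hw (hgbot w)).symm
      set Gw : ℝ := (g w).toReal with hGwdef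
      rw [hGscoe, hGwcoe, ← EReal.coe_add, ← EReal.coe_add, EReal.coe_le_coe_iff]
      by_contra hlt
      push_neg at hlt
      set ε : ℝ := (Gs + ‖zstar - (c xstar + μ • yh)‖ ^ 2 / (2 * μ)
        - (Gw + ‖w - (c xstar + μ • yh)‖ ^ 2 / (2 * μ))) / 3 with hεdef
      have hε : 0 < ε := by rw [hεdef]; linarith
      have e1 : ∀ᶠ k in atTop, ((Gs - ε : ℝ) : EReal) < g (zs (σ k)) := by
        refine hzσ.eventually (hglsc zstar _ ?_)
        show ((Gs - ε : ℝ) : EReal) < g zstar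
        rw [hGscoe]
        exact EReal.coe_lt_coe_iff.mpr (by linarith)
      have e2 : ∀ᶠ k in atTop, Qz - ε < ‖zs (σ k) - (c (x (σ k)) + μ • yh)‖ ^ 2 / (2 * μ) :=
        hdifftend.eventually_const_lt (by linarith)
      have e3 : ∀ᶠ k in atTop,
          ‖w - (c (x (σ k)) + μ • yh)‖ ^ 2 / (2 * μ)
            < ‖w - (c xstar + μ • yh)‖ ^ 2 / (2 * μ) + ε := by
        exact (((huσ.const_sub w).norm.pow 2).div_const (2 * μ)).eventually_lt_const
          (by linarith)
      obtain ⟨k, hk1, hk2, hk3⟩ := (e1.and (e2.and e3)).exists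
      rw [hGz (σ k), EReal.coe_lt_coe_iff] at hk1
      have hk4 := hprox_real (σ k) w Gw hGwcoe
      rw [hQzdef] at hk2
      linarith
  -- gradient convergence along the subsequence
  have hGmapcont := continuous_gradmap hf hc μ yh
  have hGj : ∀ j, G j = gradmap f c μ yh (x j, zs j) := fun j => gradF_eq hf hc hμpos _ _
  have hGtend : Tendsto (fun k => G (σ k)) atTop (𝓝 (gradmap f c μ yh (xstar, zstar))) := by
    have hpair : Tendsto (fun k => ((x (σ k)), (zs (σ k)))) atTop (𝓝 (xstar, zstar)) :=
      hxσ.prodMk_nhds hzσ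
    exact ((hGmapcont.tendsto (xstar, zstar)).comp hpair).congr (fun k => (hGj (σ k)).symm)
  -- the limit gradient vanishes
  have hmain : gradF f c μ yh xstar zstar = 0 := by
    rw [gradF_eq hf hc hμpos]
    by_contra hne0
    have hδ : 0 < ‖gradmap f c μ yh (xstar, zstar)‖ := norm_pos_iff.mpr hne0
    set δ : ℝ := ‖gradmap f c μ yh (xstar, zstar)‖ with hδdef
    set ε0 : ℝ := (1 - α) * θ * δ / 4 with hε0def
    have hε0 : 0 < ε0 := by
      rw [hε0def]
      have hp := mul_pos (mul_pos (by linarith [hα.2] : (0:ℝ) < 1 - α) hθ.1) hδ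
      linarith
    obtain ⟨r, hr, hball⟩ := Metric.continuousAt_iff.mp hGmapcont.continuousAt (ε0/2) (by linarith)
    have E1 : ∀ᶠ k in atTop, ‖G (σ k) - gradmap f c μ yh (xstar, zstar)‖
        < min (δ/2) (ε0/2) := by
      have h := (hGtend.sub_const (gradmap f c μ yh (xstar, zstar))).norm
      rw [sub_self, norm_zero] at h
      exact h.eventually_lt_const (lt_min (by linarith) (by linarith))
    have E2 : ∀ᶠ k in atTop, dist (x (σ k)) xstar < r/4 :=
      hxσ.eventually (Metric.ball_mem_nhds xstar (by linarith))
    have E3 : ∀ᶠ k in atTop, dist (zs (σ k)) zstar < r/2 :=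
      hzσ.eventually (Metric.ball_mem_nhds zstar (by linarith))
    have E4 : ∀ᶠ k in atTop, q (σ k) < min ((δ/2) * (β * (r/4))) ((δ/2) * (ω * (δ/2))) := by
      refine (hq0.comp hσmono.tendsto_atTop).eventually_lt_const ?_
      exact lt_min (mul_pos (by linarith) (mul_pos hβ.1 (by linarith)))
        (mul_pos (by linarith) (mul_pos hω.1 (by linarith)))
    obtain ⟨k, hk1, hk2, hk3, hk4⟩ := (E1.and (E2.and (E3.and E4))).exists
    set j : ℕ := σ k with hjdef
    have hno : δ/2 ≤ ‖G j‖ := by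
      have htri : δ ≤ ‖G j - gradmap f c μ yh (xstar, zstar)‖ + ‖G j‖ := by
        have h := norm_add_le (gradmap f c μ yh (xstar, zstar) - G j) (G j)
        rw [sub_add_cancel] at h
        rw [hδdef, norm_sub_rev (G j)]
        exact h
      have := lt_min_iff.mp hk1
      linarith [this.1]
    have hd_pos : 0 < ‖d j‖ :=
      lt_of_lt_of_le (by nlinarith [hω.1]) (hdnorm j)
    have hqj := lt_min_iff.mp hk4
    have hγd : γ j * ‖d j‖ < β * (r/4) := by
      have h1 : (δ/2) * (γ j * ‖d j‖) ≤ q j := by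
        have := mul_le_mul_of_nonneg_left hno (mul_nonneg (hγpos j).le (norm_nonneg (d j)))
        calc (δ/2) * (γ j * ‖d j‖) = (γ j * ‖d j‖) * (δ/2) := by ring
          _ ≤ (γ j * ‖d j‖) * ‖G j‖ := by
              exact mul_le_mul_of_nonneg_left hno (mul_nonneg (hγpos j).le (norm_nonneg (d j)))
          _ = q j := by simp only [hqdef]; ring
      have h2 : (δ/2) * (γ j * ‖d j‖) < (δ/2) * (β * (r/4)) := lt_of_le_of_lt h1 hqj.1
      exact lt_of_mul_lt_mul_left h2 (by linarith)
    have hγlt1 : γ j < 1 := by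
      have h1 : (δ/2) * (ω * (δ/2)) ≤ ‖G j‖ * ‖d j‖ := by
        have h2 : ω * (δ/2) ≤ ‖d j‖ := by
          refine le_trans ?_ (hdnorm j)
          exact mul_le_mul_of_nonneg_left hno hω.1.le
        exact mul_le_mul hno h2 (mul_nonneg hω.1.le (by linarith)) (norm_nonneg _)
      have hM : 0 < ‖G j‖ * ‖d j‖ :=
        lt_of_lt_of_le (mul_pos (by linarith) (mul_pos hω.1 (by linarith))) h1
      have h4 : γ j * (‖G j‖ * ‖d j‖) < 1 * (‖G j‖ * ‖d j‖) := by
        rw [one_mul]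
        exact lt_of_lt_of_le hqj.2 h1
      exact lt_of_mul_lt_mul_right h4 hM.le
    have hl1 : 1 ≤ l j := by
      by_contra hl
      push_neg at hl
      have : l j = 0 := Nat.lt_one_iff.mp hl
      rw [hγ j, this, pow_zero] at hγlt1
      exact lt_irrefl _ hγlt1
    set t : ℝ := β ^ (l j - 1) with htdef
    have ht_pos : 0 < t := pow_pos hβ.1 _
    have hβt : β * t = γ j := by
      rw [htdef, hγ j]
      conv_rhs => rw [show l j = (l j - 1) + 1 from by omega]
      rw [pow_succ]
      ring
    have hfailj := hfail j (l j - 1) (Nat.sub_lt (lt_of_lt_of_le Nat.zero_lt_one hl1)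
      Nat.zero_lt_one)
    rw [← htdef] at hfailj
    set s : EuclideanSpace ℝ (Fin n) := t • d j with hsdef
    have hs_norm : ‖s‖ = t * ‖d j‖ := by
      rw [hsdef, norm_smul, Real.norm_eq_abs, abs_of_pos ht_pos]
    have hsr : ‖s‖ < r/4 := by
      have : β * (t * ‖d j‖) = γ j * ‖d j‖ := by rw [← hβt]; ring
      rw [hs_norm]
      nlinarith [hβ.1]
    -- mean value estimate on the segment
    have hseg : ∀ uu ∈ segment ℝ (x j) (x j + s), dist (uu, zs j) (xstar, zstar) < r := by
      rintro uu huu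
      obtain ⟨a1, a2, ha1, ha2, hsum, rfl⟩ := huu
      have huu_eq : a1 • x j + a2 • (x j + s) = x j + a2 • s := by
        rw [smul_add, ← add_assoc, ← add_smul, hsum, one_smul]
      rw [huu_eq]
      have h1 : ‖(x j + a2 • s) - xstar‖ ≤ ‖x j - xstar‖ + a2 * ‖s‖ := by
        have : (x j + a2 • s) - xstar = (x j - xstar) + a2 • s := by abel
        rw [this]
        refine (norm_add_le _ _).trans ?_
        rw [norm_smul, Real.norm_eq_abs, abs_of_nonneg ha2]
      have h2 : a2 * ‖s‖ ≤ ‖s‖ := by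
        nlinarith [norm_nonneg s]
      rw [Prod.dist_eq]
      refine max_lt ?_ (lt_of_lt_of_le hk3 (by linarith))
      rw [dist_eq_norm] at hk2 ⊢
      calc ‖(x j + a2 • s) - xstar‖ ≤ ‖x j - xstar‖ + a2 * ‖s‖ := h1
        _ ≤ ‖x j - xstar‖ + ‖s‖ := by linarith
        _ < r/4 + r/4 := by linarith
        _ < r := by linarith
    have hderivbound : ∀ uu ∈ segment ℝ (x j) (x j + s),
        ‖(InnerProductSpace.toDual ℝ (EuclideanSpace ℝ (Fin n))) (gradmap f c μ yh (uu, zs j))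
          - (InnerProductSpace.toDual ℝ (EuclideanSpace ℝ (Fin n))) (G j)‖ ≤ ε0 := by
      intro uu huu
      rw [← map_sub, LinearIsometryEquiv.norm_map]
      have hb1 : ‖gradmap f c μ yh (uu, zs j) - gradmap f c μ yh (xstar, zstar)‖ < ε0/2 := by
        have := hball (hseg uu huu)
        rwa [dist_eq_norm] at this
      have hb2 : ‖gradmap f c μ yh (xstar, zstar) - G j‖ < ε0/2 := by
        rw [norm_sub_rev]
        exact lt_of_lt_of_le hk1 (min_le_right _ _)
      calc ‖gradmap f c μ yh (uu, zs j) - G j‖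
          ≤ ‖gradmap f c μ yh (uu, zs j) - gradmap f c μ yh (xstar, zstar)‖
            + ‖gradmap f c μ yh (xstar, zstar) - G j‖ := by
            simpa using norm_sub_le_norm_sub_add_norm_sub (gradmap f c μ yh (uu, zs j))
              (gradmap f c μ yh (xstar, zstar)) (G j)
        _ ≤ ε0 := by linarith
    have hmvt : ‖Ffun f c μ yh (x j + s) (zs j) - Ffun f c μ yh (x j) (zs j)
        - (InnerProductSpace.toDual ℝ (EuclideanSpace ℝ (Fin n))) (G j) ((x j + s) - x j)‖
        ≤ ε0 * ‖(x j + s) - x j‖ := by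
      refine Convex.norm_image_sub_le_of_norm_hasFDerivWithin_le'
        (f' := fun uu =>
          (InnerProductSpace.toDual ℝ (EuclideanSpace ℝ (Fin n))) (gradmap f c μ yh (uu, zs j)))
        (fun uu _ => ((hasGradientAt_Ffun hf hc hμpos (zs j) uu).hasFDerivAt).hasFDerivWithinAt)
        hderivbound (convex_segment _ _) (left_mem_segment ℝ _ _) (right_mem_segment ℝ _ _)
    rw [add_sub_cancel_left, hs_norm] at hmvt
    have htd : (InnerProductSpace.toDual ℝ (EuclideanSpace ℝ (Fin n))) (G j) s = t * ip j := by
      rw [InnerProductSpace.toDual_apply_apply, hsdef, real_inner_smul_right]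
    rw [htd, Real.norm_eq_abs] at hmvt
    have hub : Ffun f c μ yh (x j + s) (zs j) - Ffun f c μ yh (x j) (zs j)
        ≤ t * ip j + ε0 * (t * ‖d j‖) := by
      have := abs_le.mp hmvt
      linarith [this.2]
    -- the descent chain
    have hchain : P (x j + s) ≤ P (x j) + (Ffun f c μ yh (x j + s) (zs j)
        - Ffun f c μ yh (x j) (zs j)) := by
      have h1 := hPle (x j + s) j
      have h2 := hPeq j
      linarith
    have hfinal : ΦR j + α * t * ip j < ΦR j + t * ip j + ε0 * (t * ‖d j‖) := by
      calc ΦR j + α * t * ip j < P (x j + t • d j) := hfailj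
        _ = P (x j + s) := by rw [hsdef]
        _ ≤ P (x j) + (Ffun f c μ yh (x j + s) (zs j) - Ffun f c μ yh (x j) (zs j)) := hchain
        _ ≤ ΦR j + (t * ip j + ε0 * (t * ‖d j‖)) := by linarith [hPxΦ j, hub]
        _ = ΦR j + t * ip j + ε0 * (t * ‖d j‖) := by ring
    -- contradiction
    have k2 : ip j ≤ -(θ * ((δ/2) * ‖d j‖)) := by
      refine (hipneg j).trans ?_
      have := mul_le_mul_of_nonneg_left
        (mul_le_mul_of_nonneg_right hno (norm_nonneg (d j))) hθ.1.le
      linarith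
    have hpos2 : 0 < t * ‖d j‖ := mul_pos ht_pos hd_pos
    have hcontr : (1 - α) * (θ * (δ/2)) * (t * ‖d j‖) < ε0 * (t * ‖d j‖) := by
      have h1 : (1 - α) * t * (-(ip j)) < ε0 * (t * ‖d j‖) := by nlinarith [hfinal]
      have h2 : θ * ((δ/2) * ‖d j‖) ≤ -(ip j) := by linarith [k2]
      nlinarith [mul_le_mul_of_nonneg_left h2
        (mul_nonneg (by linarith [hα.2] : (0:ℝ) ≤ 1 - α) ht_pos.le)]
    have hfin2 : (1 - α) * (θ * (δ/2)) < ε0 := lt_of_mul_lt_mul_right hcontr hpos2.le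
    rw [hε0def] at hfin2
    have hP : 0 < (1 - α) * θ * δ :=
      mul_pos (mul_pos (by linarith [hα.2] : (0:ℝ) < 1 - α) hθ.1) hδ
    linarith
  refine ⟨zstar, hzstarmem, hmain, ?_⟩
  have := hmain
  rw [gradF_eq hf hc hμpos] at this
  exact this



end
end

section
/- Consider the nonmonotone descent method with oracle applied to p, run with tolerance ε > 0, i.e., terminating at the first iteration j with ‖∇ₓF(xʲ, zʲ)‖ ≤ ε, and suppose inf p ∈ ℝ and that the sequence {xʲ} admits an accumulation point. Then the method terminates after finitely many iterations, returning a pair (x*, z*) with z* ∈ O(x*) and ‖∇ₓF(x*, z*)‖ ≤ ε; in particular, x* is an ε-Υ-stationary point of p with certificate z*. -/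
open Filter Topology Bornology

noncomputable section

variable {H : Type*} [NormedAddCommGroup H] [InnerProductSpace ℝ H]

/- ### Auxiliary material for the proof -/

/-- The smooth part as a jointly-defined function on the product space. -/
private def F2aux {n m : ℕ} (f : EuclideanSpace ℝ (Fin n) → ℝ)
    (c : EuclideanSpace ℝ (Fin n) → EuclideanSpace ℝ (Fin m))
    (μ : ℝ) (yh : EuclideanSpace ℝ (Fin m)) :
    EuclideanSpace ℝ (Fin n) × EuclideanSpace ℝ (Fin m) → ℝ :=
  fun q => Ffun f c μ yh q.1 q.2

/-- The partial Fréchet derivative in `x`, obtained from the joint derivative. -/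
private def HmapAux {n m : ℕ} (f : EuclideanSpace ℝ (Fin n) → ℝ)
    (c : EuclideanSpace ℝ (Fin n) → EuclideanSpace ℝ (Fin m))
    (μ : ℝ) (yh : EuclideanSpace ℝ (Fin m)) :
    EuclideanSpace ℝ (Fin n) × EuclideanSpace ℝ (Fin m) →
      (EuclideanSpace ℝ (Fin n) →L[ℝ] ℝ) :=
  fun q => (fderiv ℝ (F2aux f c μ yh) q).comp
    (ContinuousLinearMap.inl ℝ (EuclideanSpace ℝ (Fin n)) (EuclideanSpace ℝ (Fin m)))

private theorem F2aux_contDiff {n m : ℕ} {f : EuclideanSpace ℝ (Fin n) → ℝ}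
    {c : EuclideanSpace ℝ (Fin n) → EuclideanSpace ℝ (Fin m)}
    {μ : ℝ} {yh : EuclideanSpace ℝ (Fin m)}
    (hf : ContDiff ℝ 1 f) (hc : ContDiff ℝ 1 c) : ContDiff ℝ 1 (F2aux f c μ yh) := by
  unfold F2aux Ffun
  exact (hf.comp contDiff_fst).add
    (((((hc.comp contDiff_fst).add contDiff_const).sub contDiff_snd).norm_sq ℝ).div_const _)

private theorem Ffun_hasFDerivAt {n m : ℕ} {f : EuclideanSpace ℝ (Fin n) → ℝ}
    {c : EuclideanSpace ℝ (Fin n) → EuclideanSpace ℝ (Fin m)}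
    {μ : ℝ} {yh : EuclideanSpace ℝ (Fin m)}
    (hf : ContDiff ℝ 1 f) (hc : ContDiff ℝ 1 c)
    (x0 : EuclideanSpace ℝ (Fin n)) (z : EuclideanSpace ℝ (Fin m)) :
    HasFDerivAt (fun x' => Ffun f c μ yh x' z) (HmapAux f c μ yh (x0, z)) x0 := by
  have h1 : HasFDerivAt (F2aux f c μ yh) (fderiv ℝ (F2aux f c μ yh) (x0, z)) (x0, z) :=
    (((F2aux_contDiff hf hc).differentiable one_ne_zero) _).hasFDerivAt
  exact h1.comp x0 (f := fun e => (e, z)) (hasFDerivAt_prodMk_left x0 z)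

private theorem HmapAux_continuous {n m : ℕ} {f : EuclideanSpace ℝ (Fin n) → ℝ}
    {c : EuclideanSpace ℝ (Fin n) → EuclideanSpace ℝ (Fin m)}
    {μ : ℝ} {yh : EuclideanSpace ℝ (Fin m)}
    (hf : ContDiff ℝ 1 f) (hc : ContDiff ℝ 1 c) : Continuous (HmapAux f c μ yh) := by
  have h1 : Continuous (fderiv ℝ (F2aux f c μ yh)) :=
    (F2aux_contDiff hf hc).continuous_fderiv one_ne_zero
  exact (((ContinuousLinearMap.compL ℝ (EuclideanSpace ℝ (Fin n))
    (EuclideanSpace ℝ (Fin n) × EuclideanSpace ℝ (Fin m)) ℝ).flip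
    (ContinuousLinearMap.inl ℝ _ _)).continuous).comp h1

private theorem gradF_inner_eq {n m : ℕ} {f : EuclideanSpace ℝ (Fin n) → ℝ}
    {c : EuclideanSpace ℝ (Fin n) → EuclideanSpace ℝ (Fin m)}
    {μ : ℝ} {yh : EuclideanSpace ℝ (Fin m)}
    (hf : ContDiff ℝ 1 f) (hc : ContDiff ℝ 1 c)
    (x0 : EuclideanSpace ℝ (Fin n)) (z : EuclideanSpace ℝ (Fin m))
    (v : EuclideanSpace ℝ (Fin n)) :
    (inner ℝ (gradF f c μ yh x0 z) v : ℝ) = HmapAux f c μ yh (x0, z) v := by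
  have h1 : gradF f c μ yh x0 z =
      (InnerProductSpace.toDual ℝ _).symm (HmapAux f c μ yh (x0, z)) :=
    ((Ffun_hasFDerivAt hf hc x0 z).hasGradientAt).gradient
  rw [h1, ← InnerProductSpace.toDual_apply_apply]
  simp

private theorem quad_bound_aux (δ A B r : ℝ) (hδ : 0 < δ) (hA : 0 ≤ A) (hB : 0 ≤ B)
    (hr : 0 ≤ r) (h : δ * r^2 ≤ A + B * r) : r ≤ max 1 ((A + B)/δ) := by
  rcases le_or_gt r 1 with h1 | h1
  · exact le_trans h1 (le_max_left _ _)
  · refine le_trans ?_ (le_max_right _ _)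
    rw [le_div_iff₀ hδ]
    nlinarith


private theorem zbound_aux (μ γ0 b0 gz0 gzj U C r q z0u nu : ℝ)
    (hμ : 0 < μ) (hγ : μ < γ0)
    (hr : 0 ≤ r) (hq : 0 ≤ q) (hnu : 0 ≤ nu)
    (hU : 0 ≤ U) (hnuU : nu ≤ U)
    (hC : 0 ≤ C) (hz0uC : z0u ≤ C) (hz0u : 0 ≤ z0u)
    (h1 : gzj + q^2/(2*μ) ≤ gz0 + z0u^2/(2*μ))
    (h2 : b0 ≤ gzj + r^2/(2*γ0))
    (habs : |r - nu| ≤ q) :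
    r ≤ max 1 ((max (2*μ*(gz0 - b0) + C^2) 0 + 2*U) / (1 - μ/γ0)) := by
  have hγ0 : 0 < γ0 := lt_trans hμ hγ
  have hδ : 0 < 1 - μ/γ0 := by
    rw [sub_pos, div_lt_one hγ0]; exact hγ
  have e0 : (r - nu)^2 ≤ q^2 := by
    have := sq_le_sq' (neg_le_of_abs_le habs) (le_of_abs_le habs)
    simpa [sq] using this
  have e1 : q^2 ≤ 2*μ*(gz0 - gzj) + z0u^2 := by
    have h3 : q^2/(2*μ) ≤ (gz0 - gzj) + z0u^2/(2*μ) := by linarith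
    have h4 : q^2 = 2*μ*(q^2/(2*μ)) := by field_simp
    have h5 : 2*μ*(z0u^2/(2*μ)) = z0u^2 := by field_simp
    nlinarith [mul_le_mul_of_nonneg_left h3 (by positivity : (0:ℝ) ≤ 2*μ)]
  have e2 : -gzj ≤ r^2/(2*γ0) - b0 := by linarith
  have e3 : 2*μ*(r^2/(2*γ0)) = (μ/γ0) * r^2 := by field_simp
  have e4 : q^2 ≤ 2*μ*(gz0 - b0) + (μ/γ0)*r^2 + z0u^2 := by
    nlinarith [mul_le_mul_of_nonneg_left e2 (by positivity : (0:ℝ) ≤ 2*μ)]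
  have e5 : z0u^2 ≤ C^2 := by nlinarith
  have e6 : (1 - μ/γ0) * r^2 ≤ max (2*μ*(gz0 - b0) + C^2) 0 + 2*U*r := by
    nlinarith [le_max_left (2*μ*(gz0 - b0) + C^2) (0:ℝ)]
  exact quad_bound_aux _ _ _ _ hδ (le_max_right _ _) (by linarith) hr e6

set_option maxHeartbeats 2000000 in
/-- With tolerance ε > 0, the nonmonotone descent method with oracle
terminates after finitely many iterations, returning an ε-Υ-stationary point of p with
certificate in the oracle: there is an iteration j at which ‖∇ₓF(xʲ, zʲ)‖ ≤ ε, with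
zʲ ∈ O(xʲ). The algorithmic steps are assumed to be performed as long as the termination
test has not been triggered. -/
theorem descent_method_finite_termination {n m : ℕ}
    (f : EuclideanSpace ℝ (Fin n) → ℝ)
    (c : EuclideanSpace ℝ (Fin n) → EuclideanSpace ℝ (Fin m))
    (g : EuclideanSpace ℝ (Fin m) → EReal)
    (hf : ContDiff ℝ 1 f) (hc : ContDiff ℝ 1 c)
    (hgproper : ∃ z, g z ≠ ⊤) (hgbot : ∀ z, g z ≠ ⊥)
    (hglsc : LowerSemicontinuous g)
    (μ : ℝ) (hμpos : 0 < μ)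
    (hμthr : ∃ γ0 : ℝ, μ < γ0 ∧ ProxBoundedAt g γ0)
    (yh : EuclideanSpace ℝ (Fin m))
    -- tolerance
    (ε : ℝ) (hε : 0 < ε)
    -- parameters of the descent method
    (α β θ ω ν : ℝ)
    (hα : α ∈ Set.Ioo (0 : ℝ) 1) (hβ : β ∈ Set.Ioo (0 : ℝ) 1)
    (hθ : θ ∈ Set.Ioo (0 : ℝ) 1)
    (hω : ω ∈ Set.Ioc (0 : ℝ) 1) (hν : ν ∈ Set.Ioc (0 : ℝ) 1)
    -- iterates of the method
    (x : ℕ → EuclideanSpace ℝ (Fin n)) (zs : ℕ → EuclideanSpace ℝ (Fin m))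
    (d : ℕ → EuclideanSpace ℝ (Fin n)) (γ : ℕ → ℝ) (l : ℕ → ℕ) (Φ : ℕ → EReal)
    (hΦ0 : Φ 0 = pfun f c g μ yh (x 0))
    (hzs : ∀ j, zs j ∈ proxSet g μ (c (x j) + μ • yh))
    -- the algorithmic step is performed whenever the termination test has failed so far
    (hstep : ∀ j, (∀ i, i ≤ j → ε < ‖gradF f c μ yh (x i) (zs i)‖) →
      ((inner ℝ (gradF f c μ yh (x j) (zs j)) (d j) : ℝ) ≤
          -(θ * (‖gradF f c μ yh (x j) (zs j)‖ * ‖d j‖)) ∧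
        ω * ‖gradF f c μ yh (x j) (zs j)‖ ≤ ‖d j‖) ∧
      γ j = β ^ l j ∧
      pfun f c g μ yh (x j + γ j • d j) ≤
        Φ j + ((α * γ j * (inner ℝ (gradF f c μ yh (x j) (zs j)) (d j) : ℝ) : ℝ) : EReal) ∧
      (∀ l' < l j, ¬ (pfun f c g μ yh (x j + β ^ l' • d j) ≤
        Φ j + ((α * β ^ l' * (inner ℝ (gradF f c μ yh (x j) (zs j)) (d j) : ℝ) : ℝ)
          : EReal))) ∧
      pfun f c g μ yh (x (j + 1)) ≤ pfun f c g μ yh (x j + γ j • d j) ∧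
      Φ (j + 1) =
        ((1 - ν : ℝ) : EReal) * Φ j + ((ν : ℝ) : EReal) * pfun f c g μ yh (x (j + 1)))
    -- inf p ∈ ℝ
    (hinf : ∃ b : ℝ, ∀ x', (b : EReal) ≤ pfun f c g μ yh x')
    -- the sequence of iterates admits an accumulation point
    (hacc : ∃ (xstar : EuclideanSpace ℝ (Fin n)) (φ : ℕ → ℕ),
      StrictMono φ ∧ Tendsto (fun k => x (φ k)) atTop (𝓝 xstar)) :
    ∃ j, zs j ∈ proxSet g μ (c (x j) + μ • yh) ∧ ‖gradF f c μ yh (x j) (zs j)‖ ≤ ε := by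

  classical
  by_contra hcon
  push_neg at hcon
  have hAll : ∀ j, ε < ‖gradF f c μ yh (x j) (zs j)‖ := fun j => hcon j (hzs j)
  have hstep' := fun j => hstep j (fun i _ => hAll i)
  obtain ⟨z0, hz0top⟩ := hgproper
  obtain ⟨b, hb⟩ := hinf
  have h1α : (0:ℝ) < 1 - α := by linarith [hα.2]
  have hgz0 : g z0 = (((g z0).toReal : ℝ) : EReal) := (EReal.coe_toReal hz0top (hgbot z0)).symm
  have hple : ∀ x' z', pfun f c g μ yh x' ≤ ((Ffun f c μ yh x' z' : ℝ) : EReal) + g z' :=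
    fun x' z' => iInf_le _ z'
  have hptop : ∀ x', pfun f c g μ yh x' ≠ ⊤ := by
    intro x'
    have h1 := hple x' z0
    rw [hgz0, ← EReal.coe_add] at h1
    exact ne_top_of_le_ne_top (EReal.coe_ne_top _) h1
  have hpbot : ∀ x', pfun f c g μ yh x' ≠ ⊥ := by
    intro x' h
    have h1 := hb x'
    rw [h, le_bot_iff] at h1
    exact EReal.coe_ne_bot b h1
  have hpcoe : ∀ x', pfun f c g μ yh x' = (((pfun f c g μ yh x').toReal : ℝ) : EReal) :=
    fun x' => (EReal.coe_toReal (hptop x') (hpbot x')).symm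
  have hbP : ∀ x', b ≤ (pfun f c g μ yh x').toReal := by
    intro x'
    have h1 := hb x'
    rw [hpcoe x'] at h1
    exact EReal.coe_le_coe_iff.mp h1
  have hgztop : ∀ j, g (zs j) ≠ ⊤ := by
    intro j h
    have h1 := hzs j z0
    rw [h, EReal.top_add_coe, hgz0, ← EReal.coe_add, top_le_iff] at h1
    exact EReal.coe_ne_top _ h1
  have hgzcoe : ∀ j, g (zs j) = (((g (zs j)).toReal : ℝ) : EReal) :=
    fun j => (EReal.coe_toReal (hgztop j) (hgbot _)).symm
  have hFsym : ∀ x' w, Ffun f c μ yh x' w = f x' + ‖w - (c x' + μ • yh)‖ ^ 2 / (2 * μ) := by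
    intro x' w; simp only [Ffun]; rw [norm_sub_rev]
  have eadd_shuffle : ∀ (a r : ℝ) (s : EReal),
      ((a + r : ℝ) : EReal) + s = (a : EReal) + (s + (r : EReal)) := by
    intro a r s
    rw [EReal.coe_add, add_assoc, add_comm ((r : ℝ) : EReal) s]
  have hpeqE : ∀ j, pfun f c g μ yh (x j)
      = ((Ffun f c μ yh (x j) (zs j) : ℝ) : EReal) + g (zs j) := by
    intro j
    refine le_antisymm (hple _ _) (le_iInf fun w => ?_)
    rw [hFsym (x j) (zs j), hFsym (x j) w, eadd_shuffle, eadd_shuffle]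
    exact add_le_add (le_refl _) (hzs j w)
  have hpeq : ∀ j, (pfun f c g μ yh (x j)).toReal =
      Ffun f c μ yh (x j) (zs j) + (g (zs j)).toReal := by
    intro j
    have h2 := hpeqE j
    rw [hpcoe (x j), hgzcoe j, ← EReal.coe_add] at h2
    exact EReal.coe_eq_coe_iff.mp h2
  have hΦcoe : ∀ j, Φ j = (((Φ j).toReal : ℝ) : EReal) := by
    intro j
    induction j with
    | zero => rw [hΦ0]; exact hpcoe (x 0)
    | succ j ih =>
      have h2 : Φ (j+1) = (((1-ν) * (Φ j).toReal +
          ν * (pfun f c g μ yh (x (j+1))).toReal : ℝ) : EReal) := by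
        conv_lhs => rw [(hstep' j).2.2.2.2.2, ih, hpcoe (x (j+1))]
        rw [← EReal.coe_mul, ← EReal.coe_mul, ← EReal.coe_add]
      rw [h2, EReal.toReal_coe]
  have hγpos : ∀ j, 0 < γ j := fun j => by rw [(hstep' j).2.1]; exact pow_pos hβ.1 _
  have hgpos : ∀ j, 0 < ‖gradF f c μ yh (x j) (zs j)‖ := fun j => lt_trans hε (hAll j)
  have hdpos : ∀ j, 0 < ‖d j‖ :=
    fun j => lt_of_lt_of_le (mul_pos hω.1 (hgpos j)) (hstep' j).1.2
  have hDneg : ∀ j, (inner ℝ (gradF f c μ yh (x j) (zs j)) (d j) : ℝ) < 0 := by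
    intro j
    refine lt_of_le_of_lt (hstep' j).1.1 ?_
    have := mul_pos hθ.1 (mul_pos (hgpos j) (hdpos j))
    linarith
  have hkey : ∀ j, (pfun f c g μ yh (x (j+1))).toReal ≤ (Φ j).toReal +
      α * γ j * (inner ℝ (gradF f c μ yh (x j) (zs j)) (d j) : ℝ) := by
    intro j
    have h1 := le_trans (hstep' j).2.2.2.2.1 (hstep' j).2.2.1
    rw [hpcoe (x (j+1)), hΦcoe j, ← EReal.coe_add] at h1
    exact EReal.coe_le_coe_iff.mp h1
  have hΨrec : ∀ j, (Φ (j+1)).toReal = (1-ν) * (Φ j).toReal +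
      ν * (pfun f c g μ yh (x (j+1))).toReal := by
    intro j
    have h2 : Φ (j+1) = (((1-ν) * (Φ j).toReal +
        ν * (pfun f c g μ yh (x (j+1))).toReal : ℝ) : EReal) := by
      conv_lhs => rw [(hstep' j).2.2.2.2.2, hΦcoe j, hpcoe (x (j+1))]
      rw [← EReal.coe_mul, ← EReal.coe_mul, ← EReal.coe_add]
    rw [h2, EReal.toReal_coe]
  have hαγD : ∀ j, α * γ j * (inner ℝ (gradF f c μ yh (x j) (zs j)) (d j) : ℝ) ≤ 0 := by
    intro j
    have h1 := mul_pos hα.1 (hγpos j)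
    nlinarith [hDneg j]
  have hPΨ : ∀ j, (pfun f c g μ yh (x j)).toReal ≤ (Φ j).toReal := by
    intro j
    cases j with
    | zero => rw [hΦ0]
    | succ j =>
      have h1 := hkey j
      have h2 := hΨrec j
      have h3 : (pfun f c g μ yh (x (j+1))).toReal ≤ (Φ j).toReal :=
        le_trans h1 (by linarith [hαγD j])
      have h4 : (0:ℝ) ≤ 1 - ν := by linarith [hν.2]
      nlinarith [mul_nonneg h4 (sub_nonneg.mpr h3)]
  have hΨstep : ∀ j, (Φ (j+1)).toReal ≤ (Φ j).toReal +
      ν * (α * γ j * (inner ℝ (gradF f c μ yh (x j) (zs j)) (d j) : ℝ)) := by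
    intro j
    rw [hΨrec j]
    nlinarith [mul_le_mul_of_nonneg_left (hkey j) (le_of_lt hν.1)]
  have hΨanti : Antitone (fun j => (Φ j).toReal) := by
    apply antitone_nat_of_succ_le
    intro j
    have h1 := hΨstep j
    nlinarith [mul_nonneg (le_of_lt hν.1) (neg_nonneg.mpr (hαγD j))]
  have hbdd : BddBelow (Set.range fun j => (Φ j).toReal) := by
    refine ⟨b, ?_⟩
    rintro y ⟨j, rfl⟩
    exact le_trans (hbP (x j)) (hPΨ j)
  obtain ⟨L, hL⟩ : ∃ L, Tendsto (fun j => (Φ j).toReal) atTop (𝓝 L) :=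
    ⟨_, tendsto_atTop_ciInf hΨanti hbdd⟩
  have hdiff0 : Tendsto (fun j => (Φ j).toReal - (Φ (j+1)).toReal) atTop (𝓝 0) := by
    have h2 : Tendsto (fun j => (Φ (j+1)).toReal) atTop (𝓝 L) :=
      hL.comp (tendsto_add_atTop_nat 1)
    simpa using hL.sub h2
  have hγD0 : Tendsto (fun j => γ j *
      (-(inner ℝ (gradF f c μ yh (x j) (zs j)) (d j) : ℝ))) atTop (𝓝 0) := by
    refine squeeze_zero (fun j => ?_) (fun j => ?_)
      (show Tendsto (fun j => ((Φ j).toReal - (Φ (j+1)).toReal)/(ν*α)) atTop (𝓝 0) by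
        simpa using hdiff0.div_const (ν*α))
    · exact le_of_lt (mul_pos (hγpos j) (neg_pos.mpr (hDneg j)))
    · rw [le_div_iff₀ (mul_pos hν.1 hα.1)]
      nlinarith [hΨstep j]
  have hγd0 : Tendsto (fun j => γ j * ‖d j‖) atTop (𝓝 0) := by
    refine squeeze_zero (fun j => ?_) (fun j => ?_)
      (show Tendsto (fun j => (γ j *
        (-(inner ℝ (gradF f c μ yh (x j) (zs j)) (d j) : ℝ)))/(θ*ε)) atTop (𝓝 0) by
        simpa using hγD0.div_const (θ*ε))
    · exact le_of_lt (mul_pos (hγpos j) (hdpos j))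
    · rw [le_div_iff₀ (mul_pos hθ.1 hε)]
      have h1 := (hstep' j).1.1
      nlinarith [mul_pos (mul_pos hθ.1 (hdpos j)) (sub_pos.mpr (hAll j)),
        mul_pos (hγpos j) (hdpos j), hγpos j, hθ.1, hε, hdpos j,
        mul_le_mul_of_nonneg_left h1 (le_of_lt (hγpos j))]
  have hγ00 : Tendsto γ atTop (𝓝 0) := by
    refine squeeze_zero (fun j => le_of_lt (hγpos j)) (fun j => ?_)
      (show Tendsto (fun j => (γ j * ‖d j‖)/(ω*ε)) atTop (𝓝 0) by
        simpa using hγd0.div_const (ω*ε))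
    rw [le_div_iff₀ (mul_pos hω.1 hε)]
    have h1 := (hstep' j).1.2
    nlinarith [hAll j, hγpos j, hω.1, hε,
      mul_le_mul_of_nonneg_left h1 (le_of_lt (hγpos j)),
      mul_pos (mul_pos hω.1 (hγpos j)) (sub_pos.mpr (hAll j))]
  -- the accumulation point
  obtain ⟨xstar, σ, hσmono, hxconv⟩ := hacc
  obtain ⟨γ0, hγ0μ, b0, hb0⟩ := hμthr
  have hγ0pos : (0:ℝ) < γ0 := lt_trans hμpos hγ0μ
  have hukconv : Tendsto (fun k => c (x (σ k)) + μ • yh) atTop (𝓝 (c xstar + μ • yh)) :=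
    ((hc.continuous.tendsto xstar).comp hxconv).add tendsto_const_nhds
  obtain ⟨U, hU⟩ := hukconv.norm.isBoundedUnder_le.bddAbove_range
  have hU' : ∀ k, ‖c (x (σ k)) + μ • yh‖ ≤ U := fun k => hU ⟨k, rfl⟩
  have hU0 : (0:ℝ) ≤ U := le_trans (norm_nonneg _) (hU' 0)
  -- bound on the oracle points along the subsequence
  have hzR : ∀ k, ‖zs (σ k)‖ ≤ max 1
      ((max (2*μ*((g z0).toReal - b0) + (‖z0‖ + U)^2) 0 + 2*U) / (1 - μ/γ0)) := by
    intro k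
    have h1 := hzs (σ k) z0
    rw [hgzcoe (σ k), hgz0, ← EReal.coe_add, ← EReal.coe_add] at h1
    have h1' := EReal.coe_le_coe_iff.mp h1
    have h2 := hb0 (zs (σ k))
    rw [hgzcoe (σ k), ← EReal.coe_add] at h2
    have h2' := EReal.coe_le_coe_iff.mp h2
    have habs : |‖zs (σ k)‖ - ‖c (x (σ k)) + μ • yh‖| ≤
        ‖zs (σ k) - (c (x (σ k)) + μ • yh)‖ := abs_norm_sub_norm_le _ _
    have hz0u : ‖z0 - (c (x (σ k)) + μ • yh)‖ ≤ ‖z0‖ + U :=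
      le_trans (norm_sub_le _ _) (by linarith [hU' k])
    exact zbound_aux μ γ0 b0 ((g z0).toReal) ((g (zs (σ k))).toReal) U (‖z0‖ + U)
      (‖zs (σ k)‖) (‖zs (σ k) - (c (x (σ k)) + μ • yh)‖)
      (‖z0 - (c (x (σ k)) + μ • yh)‖) (‖c (x (σ k)) + μ • yh‖)
      hμpos hγ0μ (norm_nonneg _) (norm_nonneg _) (norm_nonneg _) hU0 (hU' k)
      (by positivity) hz0u (norm_nonneg _) h1' h2' habs
  set R : ℝ := max 1
      ((max (2*μ*((g z0).toReal - b0) + (‖z0‖ + U)^2) 0 + 2*U) / (1 - μ/γ0)) with hRdef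
  -- uniform continuity of the partial derivative on a compact set
  have hK1c : IsCompact ((Metric.closedBall xstar 1) ×ˢ
      (Metric.closedBall (0 : EuclideanSpace ℝ (Fin m)) R)) :=
    (isCompact_closedBall _ _).prod (isCompact_closedBall _ _)
  have hUC := hK1c.uniformContinuousOn_of_continuous
    (HmapAux_continuous (f := f) (c := c) (μ := μ) (yh := yh) hf hc).continuousOn
  rw [Metric.uniformContinuousOn_iff] at hUC
  have hε'pos : (0:ℝ) < (1-α)*θ*ε/2 :=
    div_pos (mul_pos (mul_pos h1α hθ.1) hε) two_pos
  obtain ⟨δ, hδpos, hδ⟩ := hUC ((1-α)*θ*ε/2) hε'pos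
  -- eventual conditions along the subsequence
  have e1 : ∀ᶠ k in atTop, dist (x (σ k)) xstar < 1/2 :=
    (Metric.tendsto_nhds.mp hxconv) (1/2) (by norm_num)
  have e2 : ∀ᶠ k in atTop, γ (σ k) * ‖d (σ k)‖ < β * min δ (1/2) :=
    (hγd0.comp hσmono.tendsto_atTop).eventually
      (gt_mem_nhds (mul_pos hβ.1 (lt_min hδpos (by norm_num))))
  have e3 : ∀ᶠ k in atTop, γ (σ k) < β :=
    (hγ00.comp hσmono.tendsto_atTop).eventually (gt_mem_nhds hβ.1)
  obtain ⟨k, h1k, h2k, h3k⟩ := (e1.and (e2.and e3)).exists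
  set j := σ k with hjdef
  have hljne : l j ≠ 0 := by
    intro h0
    have h4 := (hstep' j).2.1
    rw [h0, pow_zero] at h4
    rw [h4] at h3k
    linarith [hβ.2]
  have hlj : l j = (l j - 1) + 1 := (Nat.succ_pred_eq_of_pos (Nat.pos_of_ne_zero hljne)).symm
  have htγ : γ j = β ^ (l j - 1) * β := by
    conv_lhs => rw [(hstep' j).2.1, hlj]
    rw [pow_succ]
  have htpos : (0:ℝ) < β ^ (l j - 1) := pow_pos hβ.1 _
  have htd : β ^ (l j - 1) * ‖d j‖ < min δ (1/2) := by
    have h5 : β * (β ^ (l j - 1) * ‖d j‖) < β * min δ (1/2) := by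
      rw [← mul_assoc, mul_comm β (β ^ (l j - 1)), ← htγ]
      exact h2k
    exact lt_of_mul_lt_mul_left h5 (le_of_lt hβ.1)
  have hfail := (hstep' j).2.2.2.1 (l j - 1) (Nat.sub_lt (Nat.pos_of_ne_zero hljne) one_pos)
  apply hfail
  set t := β ^ (l j - 1) with htdef
  set w := x j + t • d j with hwdef
  have hwx : w - x j = t • d j := by rw [hwdef]; exact add_sub_cancel_left _ _
  have hwnorm : ‖w - x j‖ = t * ‖d j‖ := by
    rw [hwx, norm_smul, Real.norm_eq_abs, abs_of_pos htpos]
  have htd2 := lt_min_iff.mp htd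
  have hxmem : x j ∈ Metric.closedBall (x j) (t * ‖d j‖) :=
    Metric.mem_closedBall_self (le_of_lt (mul_pos htpos (hdpos j)))
  have hwmem : w ∈ Metric.closedBall (x j) (t * ‖d j‖) := by
    rw [Metric.mem_closedBall, dist_eq_norm, hwnorm]
  have hbound : ∀ ξ ∈ Metric.closedBall (x j) (t * ‖d j‖),
      ‖HmapAux f c μ yh (ξ, zs j) - HmapAux f c μ yh (x j, zs j)‖ ≤ (1-α)*θ*ε/2 := by
    intro ξ hξ
    rw [Metric.mem_closedBall] at hξ
    have hmem1 : (ξ, zs j) ∈ (Metric.closedBall xstar 1) ×ˢ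
        (Metric.closedBall (0 : EuclideanSpace ℝ (Fin m)) R) := by
      constructor
      · rw [Metric.mem_closedBall]
        calc dist ξ xstar ≤ dist ξ (x j) + dist (x j) xstar := dist_triangle _ _ _
          _ ≤ 1 := by linarith [hξ, htd2.2, h1k]
      · rw [Metric.mem_closedBall, dist_zero_right]; exact hzR k
    have hmem2 : (x j, zs j) ∈ (Metric.closedBall xstar 1) ×ˢ
        (Metric.closedBall (0 : EuclideanSpace ℝ (Fin m)) R) := by
      constructor
      · rw [Metric.mem_closedBall]; linarith [h1k]
      · rw [Metric.mem_closedBall, dist_zero_right]; exact hzR k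
    have hdist : dist (ξ, zs j) ((x j, zs j)) < δ := by
      rw [Prod.dist_eq]
      simp only [dist_self]
      rw [max_eq_left dist_nonneg]
      exact lt_of_le_of_lt hξ htd2.1
    have h6 := hδ _ hmem1 _ hmem2 hdist
    rw [dist_eq_norm] at h6
    exact le_of_lt h6
  have hmvt := (convex_closedBall (x j) (t * ‖d j‖)).norm_image_sub_le_of_norm_hasFDerivWithin_le'
    (fun ξ _ => (Ffun_hasFDerivAt hf hc ξ (zs j)).hasFDerivWithinAt) hbound hxmem hwmem
  have hHtd : HmapAux f c μ yh (x j, zs j) (w - x j) =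
      t * (inner ℝ (gradF f c μ yh (x j) (zs j)) (d j) : ℝ) := by
    rw [hwx, map_smul, smul_eq_mul, gradF_inner_eq hf hc]
  have hF1 : Ffun f c μ yh w (zs j) ≤ Ffun f c μ yh (x j) (zs j) +
      t * (inner ℝ (gradF f c μ yh (x j) (zs j)) (d j) : ℝ) +
      ((1-α)*θ*ε/2) * (t * ‖d j‖) := by
    rw [hwnorm, hHtd] at hmvt
    have h7 : Ffun f c μ yh w (zs j) - Ffun f c μ yh (x j) (zs j) -
        t * (inner ℝ (gradF f c μ yh (x j) (zs j)) (d j) : ℝ) ≤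
        ((1-α)*θ*ε/2) * (t * ‖d j‖) :=
      le_trans (le_abs_self _) (by rw [← Real.norm_eq_abs]; exact hmvt)
    linarith
  -- the final inequality establishing the Armijo test at step size t
  calc pfun f c g μ yh w ≤ ((Ffun f c μ yh w (zs j) : ℝ) : EReal) + g (zs j) := hple _ _
    _ ≤ Φ j + ((α * t * (inner ℝ (gradF f c μ yh (x j) (zs j)) (d j) : ℝ) : ℝ) : EReal) := by
      rw [hgzcoe j, ← EReal.coe_add, hΦcoe j, ← EReal.coe_add, EReal.coe_le_coe_iff]
      have hpj := hpeq j
      have hPΨj := hPΨ j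
      have hD := (hstep' j).1.1
      have s0 : θ * (ε * ‖d j‖) ≤ θ *
          (‖gradF f c μ yh (x j) (zs j)‖ * ‖d j‖) := by
        nlinarith [mul_pos (mul_pos hθ.1 (hdpos j)) (sub_pos.mpr (hAll j))]
      have s1 : (inner ℝ (gradF f c μ yh (x j) (zs j)) (d j) : ℝ) ≤ -(θ * (ε * ‖d j‖)) :=
        le_trans hD (by linarith)
      have u1 : t * (inner ℝ (gradF f c μ yh (x j) (zs j)) (d j) : ℝ) ≤
          t * (-(θ * (ε * ‖d j‖))) := mul_le_mul_of_nonneg_left s1 (le_of_lt htpos)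
      have u2 : (1-α) * (t * (inner ℝ (gradF f c μ yh (x j) (zs j)) (d j) : ℝ)) ≤
          (1-α) * (t * (-(θ * (ε * ‖d j‖)))) := mul_le_mul_of_nonneg_left u1 (le_of_lt h1α)
      have s2 : (1-α) * (t * (inner ℝ (gradF f c μ yh (x j) (zs j)) (d j) : ℝ)) +
          ((1-α)*θ*ε/2) * (t * ‖d j‖) ≤ 0 := by
        nlinarith [u2, mul_nonneg (mul_nonneg (mul_nonneg (le_of_lt h1α) (le_of_lt hθ.1))
          (le_of_lt hε)) (le_of_lt (mul_pos htpos (hdpos j)))]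
      linarith [hF1, hpj, hPΨj, s2]


end
end
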